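/- Let X, Y, Z, W be rational numbers with X^4 + Y^4 = Z^4 + W^4 and ZW ≠ 0. Define a = (X^4 − W^4)/(Z^2 W^2), b = −W^2/Z^2, c = (Y^4 − W^4)/(Z^2 W^2), d = Z^2/W^2. Then ab + 1 = (Y/Z)^4, ac + 1 = (XY/(ZW))^4, ad + 1 = (X/W)^4, bc + 1 = (X/Z)^4, bd + 1 = 0, and cd + 1 = (Y/W)^4. -/

import Mathlib

theorem euler_to_quadruple_identities
    (X Y Z W : ℚ) (hE : X ^ 4 + Y ^ 4 = Z ^ 4 + W ^ 4) (hZW : Z * W ≠ 0)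
    (a b c d : ℚ)
    (ha : a = (X ^ 4 - W ^ 4) / (Z ^ 2 * W ^ 2))
    (hb : b = -(W ^ 2 / Z ^ 2))
    (hc : c = (Y ^ 4 - W ^ 4) / (Z ^ 2 * W ^ 2))
    (hd : d = Z ^ 2 / W ^ 2) :
    a * b + 1 = (Y / Z) ^ 4 ∧
    a * c + 1 = (X * Y / (Z * W)) ^ 4 ∧
    a * d + 1 = (X / W) ^ 4 ∧
    b * c + 1 = (X / Z) ^ 4 ∧
    b * d + 1 = 0 ∧
    c * d + 1 = (Y / W) ^ 4 := by
  have hZ : Z ≠ 0 := fun h => hZW (by simp [h])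
  have hW : W ≠ 0 := fun h => hZW (by simp [h])
  subst ha hb hc hd
  refine ⟨?_, ?_, ?_, ?_, ?_, ?_⟩
  · field_simp
    linear_combination (-1) * hE
  · field_simp
    linear_combination (-(W ^ 4)) * hE
  · field_simp
    ring
  · field_simp
    linear_combination (-1) * hE
  · field_simp; ring
  · field_simp
    ring
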